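/- Let θ : A → A^λ be a primitive substitution of constant length λ ≥ 2 and let ~θ : 𝒳(θ) → 𝒳(θ)^λ be its synchronizing part. Then: (i) the column number c(~θ) = 1; (ii) ~θ is primitive; (iii) if moreover M₀ ∈ 𝒳(θ) satisfies ~θ(M₀)_0 = M₀, then the height h(~θ) = 1. -/

import Mathlib

open Filter Topology

/-- `substIter θ l k a j` is the `j`-th letter of `θ^k(a)`, where `θ : A → A^l` is a
substitution of constant length `l` (the letters of `θ(a)` being `θ a 0, …, θ a (l-1)`).
It is meaningful for `j < l ^ k` and satisfies
`θ^{k+1}(a)_{j'·l + r} = θ(θ^k(a)_{j'})_r`. -/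
def substIter {A : Type*} (θ : A → ℕ → A) (l : ℕ) : ℕ → A → ℕ → A
  | 0, a, _ => a
  | k + 1, a, j => θ (substIter θ l k a (j / l)) (j % l)

/-- A substitution of constant length `l` is primitive if some iterate of every letter
contains every letter. -/
def SubstPrimitive {A : Type*} (θ : A → ℕ → A) (l : ℕ) : Prop :=
  ∃ k, 1 ≤ k ∧ ∀ a b : A, ∃ j, j < l ^ k ∧ substIter θ l k a j = b

/-- Primitivity of a substitution restricted to a sub-alphabet `S`. -/
def SubstPrimitiveOn {A : Type*} (θ : A → ℕ → A) (l : ℕ) (S : Set A) : Prop :=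
  ∃ k, 1 ≤ k ∧ ∀ a ∈ S, ∀ b ∈ S, ∃ j, j < l ^ k ∧ substIter θ l k a j = b

/-- The column number of a substitution of constant length `l`, restricted to the
sub-alphabet `S`: the minimal cardinality of a column set `{θ^k(a)_j : a ∈ S}`. -/
noncomputable def columnNumberOn {A : Type*} (θ : A → ℕ → A) (l : ℕ) (S : Set A) : ℕ :=
  sInf { n : ℕ | ∃ k, 1 ≤ k ∧ ∃ j, j < l ^ k ∧
    ((fun a => substIter θ l k a j) '' S).ncard = n }

/-- The column number `c(θ)` of a substitution of constant length `l`. -/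
noncomputable def columnNumber {A : Type*} (θ : A → ℕ → A) (l : ℕ) : ℕ :=
  columnNumberOn θ l Set.univ

/-- The one-sided fixed point `u` of `θ` obtained by iterating `θ` at a letter `a₀`
with `θ(a₀)_0 = a₀`: `u n = θ^k(a₀)_n` for any `k` with `n < l^k`. -/
def substFixedPoint {A : Type*} (θ : A → ℕ → A) (l : ℕ) (a₀ : A) : ℕ → A :=
  fun n => substIter θ l (n + 1) a₀ n

/-- The height `h(θ)`: the largest `m ≥ 1` coprime to `l` dividing
`gcd {r ≥ 1 : u[r] = u[0]}`, i.e. dividing every return time of `u[0]`. -/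
noncomputable def substHeight {A : Type*} (θ : A → ℕ → A) (l : ℕ) (a₀ : A) : ℕ :=
  sSup { m : ℕ | 1 ≤ m ∧ Nat.Coprime m l ∧
    ∀ r : ℕ, 1 ≤ r → substFixedPoint θ l a₀ r = substFixedPoint θ l a₀ 0 → m ∣ r }

/-- The subshift `X_θ ⊆ A^ℤ`: all `x` each of whose finite blocks occurs in some
`θ^k(a)`. -/
def subshift {A : Type*} (θ : A → ℕ → A) (l : ℕ) : Set (ℤ → A) :=
  { x | ∀ (i : ℤ) (n : ℕ), ∃ k, 1 ≤ k ∧ ∃ a : A, ∃ j : ℕ, j + n ≤ l ^ k ∧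
      ∀ m : ℕ, m < n → x (i + (m : ℤ)) = substIter θ l k a (j + m) }

/-- The subshift `X_x ⊆ A^ℤ` generated by a one-sided sequence `x ∈ A^ℕ`: all `z`
each of whose finite blocks occurs in `x`. -/
def subshiftOf {A : Type*} (x : ℕ → A) : Set (ℤ → A) :=
  { z | ∀ (i : ℤ) (n : ℕ), ∃ j : ℕ, ∀ m : ℕ, m < n → z (i + (m : ℤ)) = x (j + m) }

/-- The left shift on `A^ℤ`. -/
def shift {A : Type*} (x : ℤ → A) : ℤ → A := fun n => x (n + 1)

/-- A bounded arithmetic function. -/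
def BoundedSeq (u : ℕ → ℂ) : Prop := ∃ C : ℝ, ∀ n, ‖u n‖ ≤ C

/-- A multiplicative arithmetic function: `u(mn) = u(m)u(n)` for coprime `m, n`. -/
def MultiplicativeSeq (u : ℕ → ℂ) : Prop :=
  ∀ m n : ℕ, Nat.Coprime m n → u (m * n) = u m * u n

/-- An aperiodic arithmetic function: zero mean along every arithmetic progression. -/
def AperiodicSeq (u : ℕ → ℂ) : Prop :=
  ∀ a b : ℕ, 1 ≤ a →
    Tendsto (fun N : ℕ => (N : ℂ)⁻¹ * ∑ n ∈ Finset.Icc 1 N, u (a * n + b)) atTop (nhds 0)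

/-- The Weyl pseudo-metric
`d_W(x,y) = limsup_N sup_{ℓ ≥ 1} (1/N)·#{ℓ ≤ n < ℓ+N : x n ≠ y n}`. -/
noncomputable def weylDist {B : Type*} (x y : ℕ → B) : ℝ :=
  limsup (fun N : ℕ =>
    ⨆ ℓ : ℕ, ⨆ _ : 1 ≤ ℓ,
      (({ n : ℕ | ℓ ≤ n ∧ n < ℓ + N ∧ x n ≠ y n }.ncard : ℝ) / N)) atTop

/-- A periodic sequence. -/
def IsPeriodicSeq {B : Type*} (v : ℕ → B) : Prop :=
  ∃ p, 1 ≤ p ∧ ∀ n, v (n + p) = v n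

/-- Weyl rational almost periodicity: a `d_W`-limit of periodic sequences. -/
def WRAPSeq {B : Type*} (x : ℕ → B) : Prop :=
  ∀ ε : ℝ, 0 < ε → ∃ v : ℕ → B, IsPeriodicSeq v ∧ weylDist x v < ε

/-- The family `𝒳(θ)` of column sets realizing the column number of `θ`. -/
noncomputable def columnSets {A : Type*} (θ : A → ℕ → A) (l : ℕ) : Set (Set A) :=
  { M | (∃ k, 1 ≤ k ∧ ∃ j, j < l ^ k ∧ M = (fun a => substIter θ l k a j) '' Set.univ) ∧
        M.ncard = columnNumber θ l }

/-- The synchronizing part `~θ` of `θ`, as a substitution on subsets of the alphabet: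
`~θ(M)_j = {θ(a)_j : a ∈ M}`. -/
def synchPart {A : Type*} (θ : A → ℕ → A) : Set A → ℕ → Set A :=
  fun M j => (fun a => θ a j) '' M

/-- The joining `θ ∨ ζ` of two substitutions of the same constant length. -/
def joinSub {A B : Type*} (θ : A → ℕ → A) (ζ : B → ℕ → B) : A × B → ℕ → A × B :=
  fun p j => (θ p.1 j, ζ p.2 j)

/-- The pure base `θ^{(h)}` of `θ`: a substitution of length `l` on blocks of length `h`,
`θ^{(h)}(w)_j = θ(w)[jh, (j+1)h−1]`, where `θ(w)` is the concatenation
`θ(w_0)…θ(w_{h-1})`. -/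
def pureBase {A : Type*} (θ : A → ℕ → A) (l h : ℕ) : (Fin h → A) → ℕ → (Fin h → A) :=
  fun w j i => θ (w ⟨(j * h + i.val) / l % h, Nat.mod_lt _ i.pos⟩) ((j * h + i.val) % l)

/-- Iterated cocycle `σ^{(k)}`, with `σ^{(1)} = σ` and
`σ^{(k+1)}(M, j₁·l + j₂) = σ^{(k)}(M, j₁) ∘ σ(~θ^k(M)_{j₁}, j₂)`. -/
def sigmaIter {X : Type*} {c : ℕ} (tilde : X → ℕ → X)
    (σ : X → ℕ → Equiv.Perm (Fin c)) (l : ℕ) : ℕ → X → ℕ → Equiv.Perm (Fin c)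
  | 0, _, _ => 1
  | k + 1, M, j =>
      sigmaIter tilde σ l k M (j / l) * σ (substIter tilde l k M (j / l)) (j % l)

/-- The group extension substitution `Θ̂(g, M)_j = (g ∘ σ(M,j), ~θ(M)_j)`. -/
def hatTheta {X : Type*} {c : ℕ} (tilde : X → ℕ → X)
    (σ : X → ℕ → Equiv.Perm (Fin c)) : Equiv.Perm (Fin c) × X → ℕ → Equiv.Perm (Fin c) × X :=
  fun p j => (p.1 * σ p.2 j, tilde p.2 j)

/-- The group `G` generated by the cocycle values `σ(M, j)`, `M ∈ 𝒳`, `j < l`. -/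
def cocycleGroup {X : Type*} {c : ℕ} (σ : X → ℕ → Equiv.Perm (Fin c)) (l : ℕ) :
    Subgroup (Equiv.Perm (Fin c)) :=
  Subgroup.closure { g | ∃ M : X, ∃ j, j < l ∧ g = σ M j }

section Aux
lemma substIter_zero {A : Type*} (θ : A → ℕ → A) (l : ℕ) (a : A) (j : ℕ) :
    substIter θ l 0 a j = a := rfl
lemma substIter_succ {A : Type*} (θ : A → ℕ → A) (l k : ℕ) (a : A) (j : ℕ) :
    substIter θ l (k+1) a j = θ (substIter θ l k a (j / l)) (j % l) := rfl
lemma substIter_add {A : Type*} (θ : A → ℕ → A) (l k1 k2 : ℕ) (a : A) (m : ℕ) :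
    substIter θ l (k1 + k2) a m =
      substIter θ l k2 (substIter θ l k1 a (m / l ^ k2)) (m % l ^ k2) := by
  induction k2 generalizing m with
  | zero => simp [substIter_zero]
  | succ k ih =>
      show substIter θ l ((k1 + k) + 1) a m = _
      rw [substIter_succ, substIter_succ, ih]
      have h1 : m / l / l ^ k = m / l ^ (k+1) := by
        rw [Nat.div_div_eq_div_mul, ← pow_succ']
      have h2 : m / l % l ^ k = m % l ^ (k+1) / l := by
        rw [pow_succ']
        exact (Nat.mod_mul_right_div_self m l (l ^ k)).symm
      have h3 : m % l = m % l ^ (k+1) % l :=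
        (Nat.mod_mod_of_dvd m (dvd_pow_self l k.succ_ne_zero)).symm
      rw [h1, h2, h3]
lemma pos_bound {l : ℕ} (hl : 2 ≤ l) {k1 k2 j1 j2 : ℕ} (h1 : j1 < l ^ k1) (h2 : j2 < l ^ k2) :
    l ^ k2 * j1 + j2 < l ^ (k1 + k2) := by
  calc l ^ k2 * j1 + j2 < l ^ k2 * (j1 + 1) := by rw [Nat.mul_add, Nat.mul_one]; omega
    _ ≤ l ^ k2 * l ^ k1 := Nat.mul_le_mul_left _ h1
    _ = l ^ (k1 + k2) := by rw [← pow_add, add_comm]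
lemma div_idx {l : ℕ} (hl : 2 ≤ l) {k j2 : ℕ} (j1 : ℕ) (h2 : j2 < l ^ k) :
    (l ^ k * j1 + j2) / l ^ k = j1 := by
  rw [Nat.mul_add_div (Nat.pow_pos (by omega)), Nat.div_eq_of_lt h2, add_zero]
lemma mod_idx {l : ℕ} {k j2 : ℕ} (j1 : ℕ) (h2 : j2 < l ^ k) :
    (l ^ k * j1 + j2) % l ^ k = j2 := by
  rw [Nat.mul_add_mod, Nat.mod_eq_of_lt h2]
lemma image_col {A : Type*} (θ : A → ℕ → A) {l : ℕ} (hl : 2 ≤ l) (k1 k2 j1 j2 : ℕ)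
    (h2 : j2 < l ^ k2) (S : Set A) :
    (fun a => substIter θ l k2 a j2) '' ((fun a => substIter θ l k1 a j1) '' S) =
      (fun a => substIter θ l (k1 + k2) a (l ^ k2 * j1 + j2)) '' S := by
  rw [Set.image_image]
  apply Set.image_congr'
  intro a
  rw [substIter_add, div_idx hl j1 h2, mod_idx j1 h2]
lemma synch_iter {A : Type*} (θ : A → ℕ → A) (l k : ℕ) (M : Set A) (j : ℕ) :
    substIter (synchPart θ) l k M j = (fun a => substIter θ l k a j) '' M := by
  induction k generalizing M j with
  | zero => simp [substIter_zero]
  | succ k ih =>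
      rw [substIter_succ, ih, synchPart, Set.image_image]
      rfl
end Aux

/-- The synchronizing part `~θ : 𝒳(θ) → 𝒳(θ)^λ` of a primitive
substitution `θ` is a well-defined substitution on `𝒳(θ)` which (i) has column number
`1`, (ii) is primitive, and (iii) has height `1` (for any `M₀ ∈ 𝒳(θ)` with
`~θ(M₀)_0 = M₀`). -/
theorem synchronizing_part_properties
    {A : Type*} [Finite A] (l : ℕ) (hl : 2 ≤ l)
    (θ : A → ℕ → A) (hθ : SubstPrimitive θ l) :
    (∀ M ∈ columnSets θ l, ∀ j, j < l → synchPart θ M j ∈ columnSets θ l) ∧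
    columnNumberOn (synchPart θ) l (columnSets θ l) = 1 ∧
    SubstPrimitiveOn (synchPart θ) l (columnSets θ l) ∧
    (∀ M₀ ∈ columnSets θ l, synchPart θ M₀ 0 = M₀ →
      substHeight (synchPart θ) l M₀ = 1) := by
  classical
  have hl0 : 0 < l := by omega
  -- the defining set for the column number of θ
  have hS0ne : { n : ℕ | ∃ k, 1 ≤ k ∧ ∃ j, j < l ^ k ∧
      ((fun a => substIter θ l k a j) '' Set.univ).ncard = n }.Nonempty :=
    ⟨_, 1, le_rfl, 0, by rw [pow_one]; omega, rfl⟩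
  have hcmem : columnNumber θ l ∈ { n : ℕ | ∃ k, 1 ≤ k ∧ ∃ j, j < l ^ k ∧
      ((fun a => substIter θ l k a j) '' Set.univ).ncard = n } := Nat.sInf_mem hS0ne
  obtain ⟨k0, hk0, j0, hj0, hC⟩ := hcmem
  set C : Set A := (fun a => substIter θ l k0 a j0) '' Set.univ with hCdef
  have hge : ∀ k, 1 ≤ k → ∀ j, j < l ^ k →
      columnNumber θ l ≤ ((fun a => substIter θ l k a j) '' Set.univ).ncard :=
    fun k hk j hj => Nat.sInf_le ⟨k, hk, j, hj, rfl⟩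
  have hCcs : C ∈ columnSets θ l := ⟨⟨k0, hk0, j0, hj0, rfl⟩, hC⟩
  -- images of minimal column sets are minimal column sets
  have key_image : ∀ M ∈ columnSets θ l, ∀ k, 1 ≤ k → ∀ j, j < l ^ k →
      ((fun a => substIter θ l k a j) '' M) ∈ columnSets θ l := by
    rintro M ⟨⟨k', hk', j', hj', rfl⟩, hMc⟩ k hk j hj
    rw [image_col θ hl k' k j' j hj]
    refine ⟨⟨k' + k, by omega, l ^ k * j' + j, pos_bound hl hj' hj, rfl⟩, ?_⟩
    refine le_antisymm ?_ (hge _ (by omega) _ (pos_bound hl hj' hj))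
    rw [← image_col θ hl k' k j' j hj, ← hMc]
    exact Set.ncard_image_le (Set.toFinite _)
  -- landing on C from any column set
  have hland : ∀ k1 j1, j1 < l ^ k1 →
      (fun a => substIter θ l k0 a j0) '' ((fun a => substIter θ l k1 a j1) '' Set.univ) = C := by
    intro k1 j1 hj1
    have hsub : (fun a => substIter θ l k0 a j0) '' ((fun a => substIter θ l k1 a j1) '' Set.univ)
        ⊆ C := by rw [hCdef]; exact Set.image_mono (Set.subset_univ _)
    refine Set.eq_of_subset_of_ncard_le hsub ?_ (Set.toFinite _)
    rw [hC, image_col θ hl k1 k0 j1 j0 hj0]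
    exact hge _ (by omega) _ (pos_bound hl hj1 hj0)
  -- reaching arbitrary minimal column sets from C
  have hreach : ∀ k j, 1 ≤ k → j < l ^ k → ∀ N ∈ columnSets θ l,
      N = (fun a => substIter θ l k a j) '' Set.univ →
      (fun a => substIter θ l k a j) '' C = N := by
    intro k j hk hj N hN hNrep
    have hsub : (fun a => substIter θ l k a j) '' C ⊆ N := by
      rw [hNrep]; exact Set.image_mono (Set.subset_univ _)
    refine Set.eq_of_subset_of_ncard_le hsub ?_ (Set.toFinite _)
    rw [hN.2, (key_image C hCcs k hk j hj).2]
  have hstep : ∀ M ∈ columnSets θ l, substIter (synchPart θ) l k0 M j0 = C := by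
    rintro M hM
    rw [synch_iter]
    obtain ⟨⟨k', hk', j', hj', rfl⟩, -⟩ := hM
    exact hland k' j' hj'
  -- Part 1
  have part1 : ∀ M ∈ columnSets θ l, ∀ j, j < l → synchPart θ M j ∈ columnSets θ l := by
    intro M hM j hj
    have h1 : synchPart θ M j = (fun a => substIter θ l 1 a j) '' M := by
      show (fun a => θ a j) '' M = _
      apply Set.image_congr'
      intro a
      rw [substIter_succ, substIter_zero, Nat.mod_eq_of_lt hj]
    rw [h1]
    exact key_image M hM 1 le_rfl j (by rwa [pow_one])
  -- Part 2
  have part2 : columnNumberOn (synchPart θ) l (columnSets θ l) = 1 := by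
    have him : (fun M => substIter (synchPart θ) l k0 M j0) '' columnSets θ l = {C} := by
      apply Set.Subset.antisymm
      · rintro _ ⟨M, hM, rfl⟩
        exact hstep M hM
      · rintro _ rfl
        exact ⟨C, hCcs, hstep C hCcs⟩
    have h1mem : (1 : ℕ) ∈ { n : ℕ | ∃ k, 1 ≤ k ∧ ∃ j, j < l ^ k ∧
        ((fun M => substIter (synchPart θ) l k M j) '' columnSets θ l).ncard = n } :=
      ⟨k0, hk0, j0, hj0, by rw [him, Set.ncard_singleton]⟩
    have hlow : ∀ n ∈ { n : ℕ | ∃ k, 1 ≤ k ∧ ∃ j, j < l ^ k ∧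
        ((fun M => substIter (synchPart θ) l k M j) '' columnSets θ l).ncard = n }, 1 ≤ n := by
      rintro n ⟨k, hk, j, hj, rfl⟩
      have : 0 < ((fun M => substIter (synchPart θ) l k M j) '' columnSets θ l).ncard :=
        (Set.ncard_pos (Set.toFinite _)).mpr ⟨_, C, hCcs, rfl⟩
      omega
    exact le_antisymm (Nat.sInf_le h1mem) (hlow _ (Nat.sInf_mem ⟨1, h1mem⟩))
  -- uniform level representation
  have hrep : ∀ N : {N : Set A // N ∈ columnSets θ l}, ∃ k, 1 ≤ k ∧ ∃ j, j < l ^ k ∧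
      (N : Set A) = (fun a => substIter θ l k a j) '' Set.univ := fun N => N.2.1
  choose f hf1 g hg1 hg2 using hrep
  obtain ⟨K1, hK1⟩ := (Set.finite_range f).bddAbove
  set ks := K1 + k0 + 1 with hksdef
  have hlevel : ∀ N ∈ columnSets θ l, ∃ j, j < l ^ ks ∧
      N = (fun a => substIter θ l ks a j) '' Set.univ := by
    intro N hN
    set NN : {N : Set A // N ∈ columnSets θ l} := ⟨N, hN⟩ with hNN
    have hfN : f NN ≤ K1 := hK1 ⟨NN, rfl⟩
    set k'' := K1 + 1 - f NN with hk''
    have hkeq : k'' + k0 + f NN = ks := by omega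
    have h0lt : (0 : ℕ) < l ^ k'' := Nat.pow_pos hl0
    have hC2 : (fun a => substIter θ l (k'' + k0) a (l ^ k0 * 0 + j0)) '' Set.univ = C := by
      rw [← image_col θ hl k'' k0 0 j0 hj0]
      exact hland k'' 0 h0lt
    have hidx1 : l ^ k0 * 0 + j0 < l ^ (k'' + k0) := pos_bound hl h0lt hj0
    have hN2 : (fun a => substIter θ l (f NN) a (g NN)) '' C = N :=
      hreach (f NN) (g NN) (hf1 NN) (hg1 NN) N hN (hg2 NN)
    refine ⟨l ^ (f NN) * (l ^ k0 * 0 + j0) + g NN, ?_, ?_⟩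
    · have := pos_bound hl hidx1 (hg1 NN)
      rwa [hkeq] at this
    · rw [← hN2, ← hC2, image_col θ hl (k'' + k0) (f NN) _ _ (hg1 NN), hkeq]
  -- Part 3 : primitivity
  have hprim : SubstPrimitiveOn (synchPart θ) l (columnSets θ l) := by
    refine ⟨k0 + ks, by omega, ?_⟩
    intro M hM N hN
    obtain ⟨jN, hjN, hNrep⟩ := hlevel N hN
    refine ⟨l ^ ks * j0 + jN, pos_bound hl hj0 hjN, ?_⟩
    rw [substIter_add (synchPart θ) l k0 ks M _, div_idx hl j0 hjN, mod_idx j0 hjN,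
      hstep M hM, synch_iter]
    exact hreach ks jN (by omega) hjN N hN hNrep
  refine ⟨part1, part2, hprim, ?_⟩
  -- Part 4 : height
  intro M₀ hM₀ hfix
  have hstab : ∀ k n, n < l ^ k →
      substIter (synchPart θ) l (k+1) M₀ n = substIter (synchPart θ) l k M₀ n := by
    intro k
    induction k with
    | zero =>
        intro n hn
        have : n = 0 := by simpa using hn
        subst this
        rw [substIter_succ, substIter_zero, Nat.zero_mod, hfix, substIter_zero]
    | succ k ih =>
        intro n hn
        have hdiv : n / l < l ^ k := by
          rw [Nat.div_lt_iff_lt_mul hl0, ← pow_succ]; exact hn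
        rw [substIter_succ, ih (n / l) hdiv]
        exact (substIter_succ _ _ _ _ _).symm
  have hstab' : ∀ k k', k ≤ k' → ∀ n, n < l ^ k →
      substIter (synchPart θ) l k' M₀ n = substIter (synchPart θ) l k M₀ n := by
    intro k k' hkk'
    induction k' , hkk' using Nat.le_induction with
    | base => intro n _; rfl
    | succ k' hkk' ih =>
        intro n hn
        have hn' : n < l ^ k' := lt_of_lt_of_le hn (Nat.pow_le_pow_right hl0 hkk')
        rw [hstab k' n hn', ih n hn]
  have hconsist : ∀ k n, n < l ^ k →
      substIter (synchPart θ) l k M₀ n = substFixedPoint (synchPart θ) l M₀ n := by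
    intro k n hn
    have hn1 : n < l ^ (n + 1) :=
      lt_of_lt_of_le (Nat.lt_pow_self (n := n) hl) (Nat.pow_le_pow_right hl0 (by omega))
    have h1 := hstab' k (max k (n+1)) (le_max_left _ _) n hn
    have h2 := hstab' (n+1) (max k (n+1)) (le_max_right _ _) n hn1
    exact h1.symm.trans h2
  have hu0 : substFixedPoint (synchPart θ) l M₀ 0 = M₀ := by
    show substIter (synchPart θ) l 1 M₀ 0 = M₀
    rw [substIter_succ, substIter_zero, Nat.zero_mod, hfix]
  have humem : ∀ n, substFixedPoint (synchPart θ) l M₀ n ∈ columnSets θ l := by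
    intro n
    have hn1 : n < l ^ (n + 1) :=
      lt_of_lt_of_le (Nat.lt_pow_self (n := n) hl) (Nat.pow_le_pow_right hl0 (by omega))
    show substIter (synchPart θ) l (n+1) M₀ n ∈ columnSets θ l
    rw [synch_iter]
    exact key_image M₀ hM₀ (n+1) (by omega) n hn1
  have hdecomp : ∀ k j n, j < l ^ k →
      substFixedPoint (synchPart θ) l M₀ (l ^ k * n + j) =
        substIter (synchPart θ) l k (substFixedPoint (synchPart θ) l M₀ n) j := by
    intro k j n hj
    have hn1 : n < l ^ (n + 1) :=
      lt_of_lt_of_le (Nat.lt_pow_self (n := n) hl) (Nat.pow_le_pow_right hl0 (by omega))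
    have hbig : l ^ k * n + j < l ^ ((n+1) + k) := pos_bound hl hn1 hj
    rw [← hconsist ((n+1)+k) _ hbig, substIter_add, div_idx hl n hj, mod_idx n hj,
      hconsist (n+1) n hn1]
  have hCocc : ∀ n, substFixedPoint (synchPart θ) l M₀ (l ^ k0 * n + j0) = C := by
    intro n
    rw [hdecomp k0 j0 n hj0]
    exact hstep _ (humem n)
  obtain ⟨K2, hK2, hprim'⟩ := hprim
  obtain ⟨j1, hj1, hCM⟩ := hprim' C hCcs M₀ hM₀
  have hret : ∀ n, substFixedPoint (synchPart θ) l M₀ (l ^ K2 * (l ^ k0 * n + j0) + j1) = M₀ := by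
    intro n
    rw [hdecomp K2 j1 _ hj1, hCocc n, hCM]
  have hset : { m : ℕ | 1 ≤ m ∧ Nat.Coprime m l ∧
      ∀ r : ℕ, 1 ≤ r → substFixedPoint (synchPart θ) l M₀ r =
        substFixedPoint (synchPart θ) l M₀ 0 → m ∣ r } = {1} := by
    ext m
    simp only [Set.mem_setOf_eq, Set.mem_singleton_iff]
    constructor
    · rintro ⟨hm1, hcop, hdvd⟩
      have hP : 0 < l ^ K2 := Nat.pow_pos hl0
      have hQ : 0 < l ^ k0 := Nat.pow_pos hl0
      have hr1 : 1 ≤ l ^ K2 * (l ^ k0 * 1 + j0) + j1 :=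
        le_trans (Nat.mul_pos hP (by omega)) (Nat.le_add_right _ _)
      have hr2 : 1 ≤ l ^ K2 * (l ^ k0 * 2 + j0) + j1 :=
        le_trans (Nat.mul_pos hP (by omega)) (Nat.le_add_right _ _)
      have h1 := hdvd _ hr1 (by rw [hret 1, hu0])
      have h2 := hdvd _ hr2 (by rw [hret 2, hu0])
      have hre : l ^ K2 * (l ^ k0 * 2 + j0) + j1 =
          (l ^ K2 * (l ^ k0 * 1 + j0) + j1) + l ^ K2 * l ^ k0 := by ring
      rw [hre] at h2
      have hdiv : m ∣ l ^ K2 * l ^ k0 := (Nat.dvd_add_right h1).mp h2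
      rw [← pow_add] at hdiv
      exact Nat.Coprime.eq_one_of_dvd (Nat.Coprime.pow_right _ hcop) hdiv
    · rintro rfl
      exact ⟨le_rfl, Nat.coprime_one_left l, fun r _ _ => one_dvd r⟩
  show sSup _ = 1
  rw [hset]
  exact csSup_singleton 1
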